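/- Let D be a commutative valuation domain which is not a field, U a nonzero divisible torsion uniserial D-module such that (0 :_D u) is a principal ideal for every u ∈ U. Then the trivial extension R = D ⋉ U is a local valuation ring in which the annihilator of the element (0, e) is a nonzero principal ideal for each 0 ≠ e ∈ U. -/
import Mathlib

open TrivSqZeroExt

section Aux

variable {D : Type*} [CommRing D] [IsDomain D]
    {U : Type*} [AddCommGroup U] [Module D U] [Module Dᵐᵒᵖ U] [IsCentralScalar D U]

lemma stmt17_aux_dvd (hdiv : ∀ a : D, a ≠ 0 → ∀ u : U, ∃ v : U, a • v = u)
    (x y : TrivSqZeroExt D U) (hb : y.fst ≠ 0) (c : D) (h : x.fst = c * y.fst) :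
    ∃ r, x = r * y := by
  obtain ⟨w, hw⟩ := hdiv y.fst hb (x.snd - c • y.snd)
  refine ⟨inl c + inr w, TrivSqZeroExt.ext ?_ ?_⟩
  · simp [h]
  · simp [TrivSqZeroExt.snd_mul, op_smul_eq_smul, hw]

lemma stmt17_div_total (hval : ∀ I J : Ideal D, I ≤ J ∨ J ≤ I)
    (hdiv : ∀ a : D, a ≠ 0 → ∀ u : U, ∃ v : U, a • v = u)
    (huni : ∀ N N' : Submodule D U, N ≤ N' ∨ N' ≤ N)
    (x y : TrivSqZeroExt D U) : (∃ r, x = r * y) ∨ (∃ r, y = r * x) := by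
  by_cases hy : y.fst = 0
  · by_cases hx : x.fst = 0
    · -- both fst zero, use uniseriality
      rcases huni (Submodule.span D {x.snd}) (Submodule.span D {y.snd}) with h | h
      · left
        have := h (Submodule.mem_span_singleton_self x.snd)
        rw [Submodule.mem_span_singleton] at this
        obtain ⟨c, hc⟩ := this
        exact ⟨inl c, TrivSqZeroExt.ext (by simp [hx, hy])
          (by simp [TrivSqZeroExt.snd_mul, hc])⟩
      · right
        have := h (Submodule.mem_span_singleton_self y.snd)
        rw [Submodule.mem_span_singleton] at this
        obtain ⟨c, hc⟩ := this
        exact ⟨inl c, TrivSqZeroExt.ext (by simp [hx, hy])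
          (by simp [TrivSqZeroExt.snd_mul, hc])⟩
    · right
      exact stmt17_aux_dvd hdiv y x hx 0 (by simp [hy])
  · rcases hval (Ideal.span {x.fst}) (Ideal.span {y.fst}) with h | h
    · left
      have := h (Ideal.mem_span_singleton_self x.fst)
      rw [Ideal.mem_span_singleton] at this
      obtain ⟨c, hc⟩ := this
      exact stmt17_aux_dvd hdiv x y hy c (hc.trans (mul_comm _ _))
    · right
      have := h (Ideal.mem_span_singleton_self y.fst)
      rw [Ideal.mem_span_singleton] at this
      obtain ⟨c, hc⟩ := this
      have hx : x.fst ≠ 0 := by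
        intro h0
        exact hy (by simpa [h0] using hc)
      exact stmt17_aux_dvd hdiv y x hx c (hc.trans (mul_comm _ _))

end Aux

/-- Let `D` be a valuation domain which is not a field and `U` a nonzero divisible
torsion uniserial `D`-module with principal annihilators.  Then `R = D ⋉ U` is a local
valuation ring and, for every `0 ≠ e ∈ U`, the annihilator of `(0, e)` in `R` is a
nonzero principal ideal. -/
theorem stmt_17 {D : Type*} [CommRing D] [IsDomain D]
    (hval : ∀ I J : Ideal D, I ≤ J ∨ J ≤ I) (hnf : ¬IsField D)
    {U : Type*} [AddCommGroup U] [Module D U] [Module Dᵐᵒᵖ U] [IsCentralScalar D U] [Nontrivial U]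
    (hdiv : ∀ a : D, a ≠ 0 → ∀ u : U, ∃ v : U, a • v = u)
    (htor : ∀ u : U, ∃ a : D, a ≠ 0 ∧ a • u = 0)
    (huni : ∀ N N' : Submodule D U, N ≤ N' ∨ N' ≤ N)
    (hprann : ∀ u : U, ((Submodule.span D ({u} : Set U)).annihilator).IsPrincipal) :
    IsLocalRing (TrivSqZeroExt D U) ∧
    (∀ I J : Ideal (TrivSqZeroExt D U), I ≤ J ∨ J ≤ I) ∧
    ∀ e : U, e ≠ 0 →
      (Ideal.span ({TrivSqZeroExt.inr e} : Set (TrivSqZeroExt D U))).annihilator ≠ ⊥ ∧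
      ((Ideal.span ({TrivSqZeroExt.inr e} : Set (TrivSqZeroExt D U))).annihilator).IsPrincipal := by
  have htot := stmt17_div_total hval hdiv huni
  refine ⟨?_, ?_, ?_⟩
  · -- local
    refine IsLocalRing.of_nonunits_add ?_
    intro a b ha hb hab
    rcases htot a b with ⟨r, hr⟩ | ⟨r, hr⟩
    · apply hb
      have : a + b = (r + 1) * b := by rw [add_mul, one_mul, hr]
      rw [this] at hab
      exact isUnit_of_mul_isUnit_right hab
    · apply ha
      have : a + b = (r + 1) * a := by rw [add_mul, one_mul, hr, add_comm]
      rw [this] at hab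
      exact isUnit_of_mul_isUnit_right hab
  · -- ideals totally ordered
    intro I J
    by_cases hIJ : I ≤ J
    · exact Or.inl hIJ
    · right
      rw [SetLike.not_le_iff_exists] at hIJ
      obtain ⟨a, haI, haJ⟩ := hIJ
      intro b hbJ
      rcases htot a b with ⟨r, hr⟩ | ⟨r, hr⟩
      · exact absurd (hr ▸ Ideal.mul_mem_left J r hbJ) haJ
      · exact hr ▸ Ideal.mul_mem_left I r haI
  · intro e he
    obtain ⟨d, hd⟩ := hprann e
    have hde : d • e = 0 := by
      have : d ∈ (Submodule.span D ({e} : Set U)).annihilator := by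
        rw [hd]; exact Ideal.mem_span_singleton_self d
      rwa [Submodule.mem_annihilator_span_singleton] at this
    obtain ⟨a, ha0, hae⟩ := htor e
    have had : d ∣ a := by
      have : a ∈ (Submodule.span D ({e} : Set U)).annihilator := by
        rwa [Submodule.mem_annihilator_span_singleton]
      rw [hd, Submodule.mem_span_singleton] at this
      obtain ⟨c, hc⟩ := this
      exact ⟨c, by rw [← hc, smul_eq_mul, mul_comm]⟩
    have hd0 : d ≠ 0 := fun h => ha0 (by simpa [h] using had)
    constructor
    · rw [Submodule.ne_bot_iff]
      refine ⟨inl a, ?_, ?_⟩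
      · rw [← Ideal.submodule_span_eq, Submodule.mem_annihilator_span_singleton, smul_eq_mul]
        exact TrivSqZeroExt.ext (by simp) (by simp [TrivSqZeroExt.snd_mul, hae])
      · simp only [ne_eq, TrivSqZeroExt.ext_iff, TrivSqZeroExt.fst_inl, TrivSqZeroExt.fst_zero,
          not_and]
        intro h
        exact absurd h ha0
    · refine ⟨⟨inl d, le_antisymm ?_ ?_⟩⟩
      · intro r hr
        rw [← Ideal.submodule_span_eq, Submodule.mem_annihilator_span_singleton, smul_eq_mul] at hr
        have hre : r.fst • e = 0 := by
          have := congrArg TrivSqZeroExt.snd hr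
          simpa [TrivSqZeroExt.snd_mul] using this
        have : r.fst ∈ (Submodule.span D ({e} : Set U)).annihilator := by
          rwa [Submodule.mem_annihilator_span_singleton]
        rw [hd, Submodule.mem_span_singleton] at this
        obtain ⟨c, hc⟩ := this
        rw [smul_eq_mul] at hc
        obtain ⟨w, hw⟩ := hdiv d hd0 r.snd
        rw [Ideal.submodule_span_eq, Ideal.mem_span_singleton]
        refine ⟨inl c + inr w, ?_⟩
        exact (TrivSqZeroExt.ext (by simp [mul_comm d c, hc]) (by simp [TrivSqZeroExt.snd_mul, hw])).symm
      · rw [Ideal.submodule_span_eq, Ideal.span_le, Set.singleton_subset_iff]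
        rw [SetLike.mem_coe, ← Ideal.submodule_span_eq,
          Submodule.mem_annihilator_span_singleton, smul_eq_mul]
        exact TrivSqZeroExt.ext (by simp) (by simp [TrivSqZeroExt.snd_mul, hde])
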